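/- arXiv:2605.11285 — 3 statements merged into one kernel-verified Lean document; each statement's English description precedes it below -/
import Mathlib

section
/- Weyl's inequality for singular values: for arbitrary complex matrices X and Y of the same size with singular values s_0(X) ≤ s_1(X) ≤ … and s_0(Y) ≤ s_1(Y) ≤ … listed in increasing order, we have max_j |s_j(X) - s_j(Y)| ≤ ||X - Y||. -/
open scoped Matrix.Norms.L2Operator ComplexOrder InnerProductSpace

/-- The singular values of a complex square matrix `A`. -/
noncomputable def singularValues {n : Type*} [Fintype n] [DecidableEq n]
    (A : Matrix n n ℂ) : n → ℝ :=
  fun i => Real.sqrt ((Matrix.posSemidef_conjTranspose_mul_self A).isHermitian.eigenvalues i)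

private lemma rclike_coe (a : ℝ) : (RCLike.ofReal a : ℂ) = Complex.ofReal a := rfl

open Matrix in
/-- The squared Euclidean norm of `X *ᵥ x` as a quadratic form in eigencoordinates of `Xᴴ * X`. -/
private lemma quadform_eq {m : ℕ} (X : Matrix (Fin m) (Fin m) ℂ)
    (hA : (Xᴴ * X).IsHermitian) (x : EuclideanSpace ℂ (Fin m)) :
    ‖Matrix.toEuclideanLin X x‖ ^ 2
      = ∑ i, hA.eigenvalues i * ‖hA.eigenvectorBasis.repr x i‖ ^ 2 := by
  set b := hA.eigenvectorBasis with hb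
  have hT : Matrix.toEuclideanLin (Xᴴ * X) x
      = ∑ j, (b.repr x j * (hA.eigenvalues j : ℂ)) • b j := by
    have h0 := congrArg (Matrix.toEuclideanLin (Xᴴ * X)) (b.sum_repr x).symm
    rw [map_sum] at h0
    rw [h0]
    refine Finset.sum_congr rfl fun j _ => ?_
    rw [_root_.map_smul]
    have h2 : Matrix.toEuclideanLin (Xᴴ * X) (b j) = (hA.eigenvalues j : ℂ) • b j := by
      ext i
      have h3 := congrFun (hA.mulVec_eigenvectorBasis j) i
      simpa [Matrix.toEuclideanLin_apply, Complex.real_smul] using h3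
    rw [h2, smul_smul]
  have hadj : (⟪Matrix.toEuclideanLin X x, Matrix.toEuclideanLin X x⟫_ℂ)
      = ⟪x, Matrix.toEuclideanLin (Xᴴ * X) x⟫_ℂ := by
    have h4 : Matrix.toEuclideanLin (Xᴴ * X) x
        = Matrix.toEuclideanLin Xᴴ (Matrix.toEuclideanLin X x) := by
      simp only [Matrix.toEuclideanLin_apply, Equiv.apply_symm_apply,
        Matrix.mulVec_mulVec]
    rw [h4, Matrix.toEuclideanLin_conjTranspose_eq_adjoint, LinearMap.adjoint_inner_right]
  have hinner : (⟪x, Matrix.toEuclideanLin (Xᴴ * X) x⟫_ℂ)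
      = ∑ i, ((hA.eigenvalues i * ‖b.repr x i‖ ^ 2 : ℝ) : ℂ) := by
    rw [hT, inner_sum]
    refine Finset.sum_congr rfl fun i _ => ?_
    have h5 : (⟪x, b i⟫_ℂ) = starRingEnd ℂ (b.repr x i) := by
      rw [← inner_conj_symm, b.repr_apply_apply]
    rw [inner_smul_right, h5, mul_comm (b.repr x i) ((hA.eigenvalues i : ℂ)),
      mul_assoc, RCLike.mul_conj]
    simp only [rclike_coe]
    push_cast
    ring
  have h9 := (inner_self_eq_norm_sq_to_K (𝕜 := ℂ)
    (Matrix.toEuclideanLin X x)).symm.trans (hadj.trans hinner)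
  have h8 := congrArg Complex.re h9
  simp only [rclike_coe] at h8
  push_cast at h8
  simpa [← Complex.ofReal_pow] using h8

open Matrix in
/-- Coordinates w.r.t. an orthonormal basis vanish outside the spanning index set. -/
private lemma repr_eq_zero_of_mem_span {m : ℕ}
    (b : OrthonormalBasis (Fin m) ℂ (EuclideanSpace ℂ (Fin m))) (S : Finset (Fin m))
    {x : EuclideanSpace ℂ (Fin m)} (hx : x ∈ Submodule.span ℂ (b '' ↑S))
    {i : Fin m} (hi : i ∉ S) : b.repr x i = 0 := by
  induction hx using Submodule.span_induction with
  | mem y hy =>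
      obtain ⟨j, hj, rfl⟩ := hy
      rw [b.repr_self]
      have : i ≠ j := fun h => hi (h ▸ hj)
      simp [EuclideanSpace.single_apply, this]
  | zero => simp
  | add y z _ _ hy hz => rw [map_add]; simpa using by rw [hy, hz]; simp
  | smul c y _ hy => rw [_root_.map_smul]; simpa using by rw [hy]; simp

open Matrix in
private lemma weyl_one_sided {m : ℕ}
    (X Y : Matrix (Fin m) (Fin m) ℂ)
    (sX sY : Fin m → ℝ) (hmX : Monotone sX) (hmY : Monotone sY)
    (hsX : ∃ σ : Equiv.Perm (Fin m), sX = singularValues X ∘ σ)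
    (hsY : ∃ σ : Equiv.Perm (Fin m), sY = singularValues Y ∘ σ)
    (j : Fin m) : sX j ≤ sY j + ‖X - Y‖ := by
  obtain ⟨σ, hσ⟩ := hsX
  obtain ⟨τ, hτ⟩ := hsY
  set hAX := (Matrix.posSemidef_conjTranspose_mul_self X).isHermitian with hhAX
  set hAY := (Matrix.posSemidef_conjTranspose_mul_self Y).isHermitian with hhAY
  set bX := hAX.eigenvectorBasis
  set bY := hAY.eigenvectorBasis
  have hμX : ∀ i, hAX.eigenvalues i = (singularValues X i) ^ 2 := fun i =>
    (Real.sq_sqrt ((Matrix.posSemidef_conjTranspose_mul_self X).eigenvalues_nonneg i)).symm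
  have hμY : ∀ i, hAY.eigenvalues i = (singularValues Y i) ^ 2 := fun i =>
    (Real.sq_sqrt ((Matrix.posSemidef_conjTranspose_mul_self Y).eigenvalues_nonneg i)).symm
  have hsX0 : ∀ k, 0 ≤ sX k := fun k => by rw [hσ]; exact Real.sqrt_nonneg _
  have hsY0 : ∀ k, 0 ≤ sY k := fun k => by rw [hτ]; exact Real.sqrt_nonneg _
  set SX : Finset (Fin m) := (Finset.Ici j).image σ with hSX
  set SY : Finset (Fin m) := (Finset.Iic j).image τ with hSY
  set V := Submodule.span ℂ (⇑bX '' ↑SX) with hV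
  set W := Submodule.span ℂ (⇑bY '' ↑SY) with hW
  -- dimension count
  have hdim : ∀ (b : OrthonormalBasis (Fin m) ℂ (EuclideanSpace ℂ (Fin m)))
      (π : Equiv.Perm (Fin m)) (T : Finset (Fin m)),
      Module.finrank ℂ ↥(Submodule.span ℂ (⇑b '' ↑(T.image π))) = T.card := by
    intro b π T
    have hli : LinearIndependent ℂ (fun k : {x // x ∈ T} => b (π k)) :=
      (b.orthonormal.linearIndependent).comp _
        (fun a c h => Subtype.ext (π.injective h))
    have hr : Set.range (fun k : {x // x ∈ T} => b (π k)) = ⇑b '' ↑(T.image π) := by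
      ext y
      simp only [Set.mem_range, Set.mem_image, Finset.coe_image, Set.mem_image,
        Finset.mem_coe]
      constructor
      · rintro ⟨⟨k, hk⟩, rfl⟩; exact ⟨π k, ⟨k, hk, rfl⟩, rfl⟩
      · rintro ⟨i, ⟨k, hk, rfl⟩, rfl⟩; exact ⟨⟨k, hk⟩, rfl⟩
    rw [← hr, finrank_span_eq_card hli, Fintype.card_coe]
  have hdimV : Module.finrank ℂ ↥V = m - j := by
    rw [hV, hdim bX σ (Finset.Ici j), Fin.card_Ici]
  have hdimW : Module.finrank ℂ ↥W = (j : ℕ) + 1 := by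
    rw [hW, hdim bY τ (Finset.Iic j), Fin.card_Iic]
  -- nontrivial intersection
  have hfin : 1 ≤ Module.finrank ℂ ↥(V ⊓ W) := by
    have h1 := Submodule.finrank_sup_add_finrank_inf_eq V W
    have h2 : Module.finrank ℂ ↥(V ⊔ W) ≤ m := by
      have := Submodule.finrank_le (V ⊔ W)
      rwa [finrank_euclideanSpace, Fintype.card_fin] at this
    have hj := j.isLt
    omega
  obtain ⟨⟨x, hxVW⟩, hx0⟩ := Module.finrank_pos_iff_exists_ne_zero.mp hfin
  have hxV : x ∈ V := hxVW.1
  have hxW : x ∈ W := hxVW.2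
  have hx0' : x ≠ 0 := fun h => hx0 (by simpa using h)
  have hxnorm : (0:ℝ) < ‖x‖ := norm_pos_iff.mpr hx0'
  -- norm expansion
  have hxsum : ∀ (b : OrthonormalBasis (Fin m) ℂ (EuclideanSpace ℂ (Fin m))),
      ‖x‖ ^ 2 = ∑ i, ‖b.repr x i‖ ^ 2 := by
    intro b
    rw [← b.repr.norm_map x, EuclideanSpace.norm_eq,
      Real.sq_sqrt (Finset.sum_nonneg fun i _ => sq_nonneg _)]
  -- lower bound for X
  have hlow : sX j * ‖x‖ ≤ ‖Matrix.toEuclideanLin X x‖ := by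
    have h1 : (sX j) ^ 2 * ‖x‖ ^ 2 ≤ ‖Matrix.toEuclideanLin X x‖ ^ 2 := by
      rw [quadform_eq X hAX x, hxsum bX, Finset.mul_sum]
      refine Finset.sum_le_sum fun i _ => ?_
      by_cases hi : i ∈ SX
      · obtain ⟨k, hk, rfl⟩ := Finset.mem_image.mp hi
        have hk' : j ≤ k := Finset.mem_Ici.mp hk
        have : sX j ≤ sX k := hmX hk'
        have h2 : (sX j) ^ 2 ≤ hAX.eigenvalues (σ k) := by
          rw [hμX (σ k)]
          have : singularValues X (σ k) = sX k := by rw [hσ]; rfl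
          rw [this]
          exact pow_le_pow_left₀ (hsX0 j) (hmX hk') 2
        exact mul_le_mul_of_nonneg_right h2 (sq_nonneg _)
      · rw [repr_eq_zero_of_mem_span bX SX hxV hi]
        simp
    have h3 : (sX j * ‖x‖) ^ 2 ≤ ‖Matrix.toEuclideanLin X x‖ ^ 2 := by
      rw [mul_pow]; exact h1
    have h4 : 0 ≤ sX j * ‖x‖ := mul_nonneg (hsX0 j) (norm_nonneg _)
    nlinarith [norm_nonneg (Matrix.toEuclideanLin X x)]
  -- upper bound for Y
  have hup : ‖Matrix.toEuclideanLin Y x‖ ≤ sY j * ‖x‖ := by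
    have h1 : ‖Matrix.toEuclideanLin Y x‖ ^ 2 ≤ (sY j) ^ 2 * ‖x‖ ^ 2 := by
      rw [quadform_eq Y hAY x, hxsum bY, Finset.mul_sum]
      refine Finset.sum_le_sum fun i _ => ?_
      by_cases hi : i ∈ SY
      · obtain ⟨k, hk, rfl⟩ := Finset.mem_image.mp hi
        have hk' : k ≤ j := Finset.mem_Iic.mp hk
        have h2 : hAY.eigenvalues (τ k) ≤ (sY j) ^ 2 := by
          rw [hμY (τ k)]
          have : singularValues Y (τ k) = sY k := by rw [hτ]; rfl
          rw [this]
          exact pow_le_pow_left₀ (hsY0 k) (hmY hk') 2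
        exact mul_le_mul_of_nonneg_right h2 (sq_nonneg _)
      · rw [repr_eq_zero_of_mem_span bY SY hxW hi]
        simp
    have h4 : 0 ≤ sY j * ‖x‖ := mul_nonneg (hsY0 j) (norm_nonneg _)
    nlinarith [norm_nonneg (Matrix.toEuclideanLin Y x)]
  -- operator norm bound
  have hop : ‖Matrix.toEuclideanLin (X - Y) x‖ ≤ ‖X - Y‖ * ‖x‖ := by
    exact Matrix.l2_opNorm_mulVec (X - Y) x
  -- triangle inequality
  have htri : ‖Matrix.toEuclideanLin X x‖
      ≤ ‖Matrix.toEuclideanLin Y x‖ + ‖Matrix.toEuclideanLin (X - Y) x‖ := by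
    have h1 : Matrix.toEuclideanLin X x
        = Matrix.toEuclideanLin Y x + Matrix.toEuclideanLin (X - Y) x := by
      rw [map_sub, LinearMap.sub_apply]; abel
    rw [h1]
    exact norm_add_le _ _
  have hfinal : sX j * ‖x‖ ≤ (sY j + ‖X - Y‖) * ‖x‖ := by
    calc sX j * ‖x‖ ≤ ‖Matrix.toEuclideanLin X x‖ := hlow
      _ ≤ ‖Matrix.toEuclideanLin Y x‖ + ‖Matrix.toEuclideanLin (X - Y) x‖ := htri
      _ ≤ sY j * ‖x‖ + ‖X - Y‖ * ‖x‖ := add_le_add hup hop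
      _ = (sY j + ‖X - Y‖) * ‖x‖ := by ring
  exact le_of_mul_le_mul_right hfinal hxnorm

/-- Weyl's inequality for singular values: if `sX` and `sY` are the singular values of
`X` and `Y` listed in nondecreasing order, then `|sX j - sY j| ≤ ‖X - Y‖` for every `j`,
where `‖·‖` is the operator norm. -/
theorem weyl_inequality_singularValues {m : ℕ}
    (X Y : Matrix (Fin m) (Fin m) ℂ)
    (sX sY : Fin m → ℝ) (hmX : Monotone sX) (hmY : Monotone sY)
    (hsX : ∃ σ : Equiv.Perm (Fin m), sX = singularValues X ∘ σ)
    (hsY : ∃ σ : Equiv.Perm (Fin m), sY = singularValues Y ∘ σ) :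
    ∀ j, |sX j - sY j| ≤ ‖X - Y‖ := by
  intro j
  rw [abs_sub_le_iff]
  constructor
  · have := weyl_one_sided X Y sX sY hmX hmY hsX hsY j
    linarith
  · have := weyl_one_sided Y X sY sX hmY hmX hsY hsX j
    rw [norm_sub_rev] at this
    linarith
end

section
/- Let m ≥ 2 and define x_k = sin²((2k-1)π/(4m)) for k = 1,…,m. Then for each fixed k, the product over j ≠ k of |x_j / (x_j - x_k)| equals (1/m)·cot((2k-1)π/(4m)). -/
open Polynomial Real Finset

/-- The Chebyshev nodes `x_k = sin²((2k-1)π/(4m))`. -/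
noncomputable def chebNode (m k : ℕ) : ℝ :=
  Real.sin ((2 * (k : ℝ) - 1) * Real.pi / (4 * m)) ^ 2

private lemma natDegree_T_le : ∀ n : ℕ, (Polynomial.Chebyshev.T ℝ (n : ℤ)).natDegree ≤ n
  | 0 => by simp
  | 1 => by simp
  | (n+2) => by
    have h1 := natDegree_T_le n
    have h2 := natDegree_T_le (n+1)
    have hc : ((n+2 : ℕ) : ℤ) = (n : ℤ) + 2 := by push_cast; ring
    rw [hc, Polynomial.Chebyshev.T_add_two]
    refine (Polynomial.natDegree_sub_le _ _).trans ?_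
    have h3 : ((2 : ℝ[X]) * X * Polynomial.Chebyshev.T ℝ ((n:ℤ) + 1)).natDegree ≤ n + 2 := by
      refine Polynomial.natDegree_mul_le.trans ?_
      have hX : (2 * X : ℝ[X]).natDegree ≤ 1 := by compute_degree
      have hc2 : ((n:ℤ) + 1) = ((n+1 : ℕ) : ℤ) := by push_cast; ring
      rw [hc2]; omega
    omega

/-- For Chebyshev nodes `x_k = sin²((2k-1)π/(4m))`, `k = 1,…,m`, and `m ≥ 2`:
`∏_{j ≠ k} |x_j / (x_j - x_k)| = (1/m) · cot((2k-1)π/(4m))`. -/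
theorem chebNode_product_eq_cot (m : ℕ) (hm : 2 ≤ m) (k : ℕ)
    (hk : k ∈ Finset.Icc 1 m) :
    ∏ j ∈ (Finset.Icc 1 m).erase k, |chebNode m j / (chebNode m j - chebNode m k)| =
      (1 / m) * Real.cot ((2 * (k : ℝ) - 1) * Real.pi / (4 * m)) := by
  classical
  obtain ⟨hk1, hkm⟩ := Finset.mem_Icc.mp hk
  have hmR : (0:ℝ) < m := by exact_mod_cast Nat.lt_of_lt_of_le (by norm_num) hm
  set θ : ℕ → ℝ := fun j => (2 * (j:ℝ) - 1) * Real.pi / (4 * m) with hθdef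
  set x : ℕ → ℝ := chebNode m with hxdef
  have hxθ : ∀ j, x j = Real.sin (θ j) ^ 2 := fun j => rfl
  set s : Finset ℕ := Finset.Icc 1 m with hsdef
  -- basic bounds
  have hθpos : ∀ j ∈ s, 0 < θ j := by
    intro j hj
    obtain ⟨h1, h2⟩ := Finset.mem_Icc.mp hj
    have : (0:ℝ) < 2 * (j:ℝ) - 1 := by
      have : (1:ℝ) ≤ (j:ℝ) := by exact_mod_cast h1
      linarith
    have := Real.pi_pos
    positivity
  have hθlt : ∀ j ∈ s, θ j < Real.pi / 2 := by
    intro j hj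
    obtain ⟨h1, h2⟩ := Finset.mem_Icc.mp hj
    have hj2 : (j:ℝ) ≤ m := by exact_mod_cast h2
    have hpi := Real.pi_pos
    rw [hθdef]
    rw [div_lt_iff₀ (by positivity)]
    nlinarith
  have hsin : ∀ j ∈ s, 0 < Real.sin (θ j) := fun j hj =>
    Real.sin_pos_of_pos_of_lt_pi (hθpos j hj) ((hθlt j hj).trans (by linarith [Real.pi_pos]))
  have hcos : ∀ j ∈ s, 0 < Real.cos (θ j) := fun j hj =>
    Real.cos_pos_of_mem_Ioo ⟨by linarith [hθpos j hj, Real.pi_pos], hθlt j hj⟩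
  have hxpos : ∀ j ∈ s, 0 < x j := fun j hj => by
    rw [hxθ]; exact pow_pos (hsin j hj) 2
  -- injectivity
  have hinj : ∀ i ∈ s, ∀ j ∈ s, x i = x j → i = j := by
    intro i hi j hj hxij
    have h2 : Real.sqrt (Real.sin (θ i)^2) = Real.sqrt (Real.sin (θ j)^2) := by
      rw [← hxθ, ← hxθ, hxij]
    rw [Real.sqrt_sq (hsin i hi).le, Real.sqrt_sq (hsin j hj).le] at h2
    have hθij : θ i = θ j := by
      refine Real.injOn_sin ⟨?_, (hθlt i hi).le⟩ ⟨?_, (hθlt j hj).le⟩ h2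
      · linarith [hθpos i hi, Real.pi_pos]
      · linarith [hθpos j hj, Real.pi_pos]
    have hij : (i:ℝ) = j := by
      rw [hθdef] at hθij
      have hpi := Real.pi_pos
      have h4m : (4:ℝ) * m > 0 := by positivity
      rw [div_eq_div_iff (by positivity) (by positivity)] at hθij
      have h5 := mul_right_cancel₀ (show (4:ℝ) * m ≠ 0 by positivity) hθij
      have h6 := mul_right_cancel₀ Real.pi_ne_zero h5
      linarith
    exact_mod_cast hij
  -- polynomial
  set lin : ℝ[X] := 1 - C 2 * X with hlindef
  set p : ℝ[X] := (Polynomial.Chebyshev.T ℝ (m:ℤ)).comp lin with hpdef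
  have hpeval : ∀ a : ℝ, p.eval a = (Polynomial.Chebyshev.T ℝ (m:ℤ)).eval (1 - 2*a) := by
    intro a; rw [hpdef, Polynomial.eval_comp]; norm_num [hlindef]
  have hcos2 : ∀ j, 1 - 2 * x j = Real.cos (2 * θ j) := by
    intro j
    rw [Real.cos_two_mul, hxθ]
    nlinarith [Real.sin_sq_add_cos_sq (θ j)]
  have hangle : ∀ j : ℕ, (m:ℝ) * (2 * θ j) = (j:ℝ) * Real.pi - Real.pi/2 := by
    intro j
    rw [hθdef]
    field_simp
    ring
  have hroot : ∀ j ∈ s, p.eval (x j) = 0 := by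
    intro j hj
    rw [hpeval, hcos2, Polynomial.Chebyshev.T_real_cos]
    push_cast
    rw [hangle j, show (j:ℝ) * Real.pi - Real.pi/2 = -(Real.pi/2 - (j:ℝ) * Real.pi) by ring,
      Real.cos_neg, Real.cos_pi_div_two_sub, Real.sin_nat_mul_pi]
  have hpne : p ≠ 0 := by
    intro h
    have h1 : p.eval 1 = Real.cos ((m:ℝ) * Real.pi) := by
      have he : (1:ℝ) - 2 * 1 = Real.cos Real.pi := by rw [Real.cos_pi]; ring
      rw [hpeval, he, Polynomial.Chebyshev.T_real_cos]
      push_cast; ring_nf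
    have h2 : |Real.cos ((m:ℝ) * Real.pi)| = 1 := by
      have := Real.abs_cos_int_mul_pi (m:ℤ)
      push_cast at this
      exact this
    rw [h, Polynomial.eval_zero] at h1
    rw [← h1] at h2
    norm_num at h2
  -- factorization
  obtain ⟨c, hc0, hfact⟩ : ∃ c : ℝ, c ≠ 0 ∧ p = (∏ j ∈ s, (X - C (x j))) * C c := by
    have hM_nodup : (s.val.map x).Nodup :=
      Multiset.Nodup.map_on (fun i hi j hj h => hinj i hi j hj h) s.nodup
    have hMle : s.val.map x ≤ p.roots := by
      rw [Multiset.le_iff_subset hM_nodup]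
      intro a ha
      obtain ⟨j, hj, rfl⟩ := Multiset.mem_map.mp ha
      rw [Polynomial.mem_roots hpne]
      exact hroot j hj
    have hdvd : (∏ j ∈ s, (X - C (x j))) ∣ p := by
      have hd := (Multiset.prod_dvd_prod_of_le
          (Multiset.map_le_map (f := fun a => X - C a) hMle)).trans
        (Polynomial.prod_multiset_X_sub_C_dvd p)
      have heq : ((s.val.map x).map fun a => X - C a).prod = ∏ j ∈ s, (X - C (x j)) := by
        rw [Multiset.map_map, Finset.prod_eq_multiset_prod]
        rfl
      rwa [heq] at hd
    obtain ⟨q, hq⟩ := hdvd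
    have hGne : (∏ j ∈ s, (X - C (x j))) ≠ 0 :=
      Finset.prod_ne_zero_iff.mpr (fun j hj => Polynomial.X_sub_C_ne_zero (x j))
    have hqne : q ≠ 0 := by rintro rfl; rw [mul_zero] at hq; exact hpne hq
    have hdegG : (∏ j ∈ s, (X - C (x j))).natDegree = m := by
      rw [Polynomial.natDegree_prod _ _ (fun j hj => Polynomial.X_sub_C_ne_zero (x j))]
      simp [Polynomial.natDegree_X_sub_C, hsdef]
    have hdegp : p.natDegree ≤ m := by
      calc p.natDegree ≤ (Polynomial.Chebyshev.T ℝ (m:ℤ)).natDegree * lin.natDegree :=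
            Polynomial.natDegree_comp_le
      _ ≤ m * 1 := Nat.mul_le_mul (natDegree_T_le m) (by rw [hlindef]; compute_degree)
      _ = m := mul_one m
    have hdq : q.natDegree = 0 := by
      have hmul := Polynomial.natDegree_mul hGne hqne
      rw [← hq, hdegG] at hmul
      omega
    refine ⟨q.coeff 0, ?_, ?_⟩
    · intro h0
      apply hqne
      rw [Polynomial.eq_C_of_natDegree_eq_zero hdq, h0, map_zero]
    · rw [hq]
      congr 1
      exact Polynomial.eq_C_of_natDegree_eq_zero hdq
  -- split off the k-th factor
  set G : ℝ[X] := ∏ j ∈ s.erase k, (X - C (x j)) with hGdef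
  have hsplit : p = (X - C (x k)) * G * C c := by
    rw [hfact, ← Finset.mul_prod_erase s _ hk, hGdef, mul_assoc, ← mul_assoc]
  -- evaluation at 0
  have hev0 : p.eval 0 = 1 := by
    rw [hpeval]
    norm_num
  have hGeval0 : G.eval 0 = ∏ j ∈ s.erase k, (0 - x j) := by
    rw [hGdef, Polynomial.eval_prod]
    exact Finset.prod_congr rfl fun j hj => by simp
  have hprod0 : (0 - x k) * (∏ j ∈ s.erase k, (0 - x j)) * c = 1 := by
    have h := hev0
    rw [hsplit, Polynomial.eval_mul, Polynomial.eval_mul, Polynomial.eval_sub,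
      Polynomial.eval_X, Polynomial.eval_C, Polynomial.eval_C, hGeval0] at h
    exact h
  have habs0 : x k * (∏ j ∈ s.erase k, x j) * |c| = 1 := by
    have h1 : |(0 - x k) * (∏ j ∈ s.erase k, (0 - x j)) * c| = 1 := by rw [hprod0]; norm_num
    rw [abs_mul, abs_mul, Finset.abs_prod] at h1
    rw [show |0 - x k| = x k by rw [zero_sub, abs_neg, abs_of_pos (hxpos k hk)]] at h1
    rw [Finset.prod_congr rfl (fun j hj => show |0 - x j| = x j by
      rw [zero_sub, abs_neg, abs_of_pos (hxpos j (Finset.mem_of_mem_erase hj))])] at h1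
    exact h1
  -- derivative evaluation at x k
  have hGevalk : G.eval (x k) = ∏ j ∈ s.erase k, (x k - x j) := by
    rw [hGdef, Polynomial.eval_prod]
    exact Finset.prod_congr rfl fun j hj => by simp
  have hderiv1 : (Polynomial.derivative p).eval (x k) = G.eval (x k) * c := by
    rw [hsplit]
    simp [Polynomial.derivative_mul, Polynomial.derivative_X_sub_C]
  have hsin2 : 0 < Real.sin (2 * θ k) := by
    apply Real.sin_pos_of_pos_of_lt_pi
    · linarith [hθpos k hk]
    · linarith [hθlt k hk]
  have hU := Polynomial.Chebyshev.U_real_cos (2 * θ k) ((m:ℤ) - 1)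
  have hderiv2 : (Polynomial.derivative p).eval (x k) * Real.sin (2 * θ k)
      = -2 * m * Real.sin ((m:ℝ) * (2 * θ k)) := by
    rw [hpdef, Polynomial.derivative_comp, Polynomial.eval_mul, Polynomial.eval_comp]
    have hdlin : (Polynomial.derivative lin).eval (x k) = -2 := by
      simp [hlindef]
    have hlineval : lin.eval (x k) = Real.cos (2 * θ k) := by
      rw [hlindef]
      simp only [Polynomial.eval_sub, Polynomial.eval_one, Polynomial.eval_mul,
        Polynomial.eval_C, Polynomial.eval_X]
      exact hcos2 k
    rw [hdlin, hlineval, Polynomial.Chebyshev.T_derivative_eq_U, Polynomial.eval_mul]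
    have hcast : ((((m:ℤ) : ℝ[X])).eval (Real.cos (2 * θ k))) = (m:ℝ) := by
      push_cast; simp
    rw [hcast, mul_assoc, mul_assoc, hU]
    have hcc : ((((m:ℤ) - 1 : ℤ) : ℝ)) + 1 = (m:ℝ) := by push_cast; ring
    rw [hcc]
    ring
  have hsinm : Real.sin ((m:ℝ) * (2 * θ k)) = -Real.cos ((k:ℝ) * Real.pi) := by
    rw [hangle k, Real.sin_sub_pi_div_two]
  have hcosk : |Real.cos ((k:ℝ) * Real.pi)| = 1 := by
    have := Real.abs_cos_int_mul_pi (k:ℤ)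
    push_cast at this
    exact this
  have habs2 : |G.eval (x k)| * |c| * Real.sin (2 * θ k) = 2 * m := by
    have h := hderiv2
    rw [hderiv1, hsinm] at h
    have h2 : |G.eval (x k) * c * Real.sin (2 * θ k)| = |(2:ℝ) * m * Real.cos ((k:ℝ) * Real.pi)| := by
      rw [h]; congr 1; ring
    rw [abs_mul, abs_mul, abs_of_pos hsin2] at h2
    rw [abs_mul, hcosk, mul_one, abs_mul] at h2
    rw [h2, abs_of_pos (show (0:ℝ) < 2 by norm_num), abs_of_pos hmR]
  -- final computation
  have hsk : 0 < Real.sin (θ k) := hsin k hk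
  have hck : 0 < Real.cos (θ k) := hcos k hk
  have hxk : 0 < x k := hxpos k hk
  have hcabs : 0 < |c| := abs_pos.mpr hc0
  have hGabs : 0 < |G.eval (x k)| := by
    refine abs_pos.mpr fun h0 => ?_
    rw [h0, abs_zero, zero_mul, zero_mul] at habs2
    nlinarith
  have hL : ∏ j ∈ s.erase k, |x j / (x j - x k)|
      = (∏ j ∈ s.erase k, x j) / |G.eval (x k)| := by
    rw [hGevalk, Finset.abs_prod, ← Finset.prod_div_distrib]
    refine Finset.prod_congr rfl fun j hj => ?_
    rw [abs_div, abs_of_pos (hxpos j (Finset.mem_of_mem_erase hj)), abs_sub_comm]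
  have hP0 : ∏ j ∈ s.erase k, x j = 1 / (x k * |c|) := by
    field_simp at habs0 ⊢
    linarith [habs0]
  have hGval : |G.eval (x k)| = 2 * m / (|c| * Real.sin (2 * θ k)) := by
    field_simp
    linarith [habs2]
  rw [hL, hP0, hGval]
  rw [show (2 * (k : ℝ) - 1) * Real.pi / (4 * m) = θ k by rw [hθdef]]
  rw [Real.cot_eq_cos_div_sin]
  have hx2 : x k = Real.sin (θ k) ^ 2 := hxθ k
  have hs2 : Real.sin (2 * θ k) = 2 * Real.sin (θ k) * Real.cos (θ k) := by
    rw [Real.sin_two_mul]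
  rw [hx2, hs2]
  clear_value θ
  field_simp
end

section
/- Let m ≥ 2 and define x_k = sin²((2k-1)π/(4m)) for k = 1,…,m, and set α(x) = ∑_{k=1}^m ∏_{j≠k} |x_j/(x_j - x_k)|. Then α(x) ≤ 3 log(m). -/
open Polynomial in
lemma prod_one_sub_zeta (n : ℕ) (hn : 1 ≤ n) :
    ∏ i ∈ Finset.Ico 1 n, (1 - Complex.exp (2 * Real.pi * Complex.I / n) ^ i) = n := by
  set ζ := Complex.exp (2 * Real.pi * Complex.I / n) with hζdef
  have hζ : IsPrimitiveRoot ζ n := Complex.isPrimitiveRoot_exp n (by omega)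
  have hroots : ((X:ℂ[X]) ^ n - C 1).roots = (Multiset.range n).map (fun i => ζ ^ i * 1) := by
    rw [← Polynomial.nthRoots]; exact hζ.nthRoots_eq (one_pow n)
  have hmonic : ((X:ℂ[X]) ^ n - C 1).Monic := monic_X_pow_sub_C 1 (by omega)
  have hcard : Multiset.card ((X:ℂ[X]) ^ n - C 1).roots = ((X:ℂ[X]) ^ n - C 1).natDegree := by
    rw [hroots, Multiset.card_map, Multiset.card_range, natDegree_X_pow_sub_C]
  have hX : (X:ℂ[X]) ^ n - 1 = ∏ i ∈ Finset.range n, (X - C (ζ ^ i)) := by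
    have h := prod_multiset_X_sub_C_of_monic_of_roots_card_eq hmonic hcard
    rw [hroots, C_1] at h
    rw [← h]
    simp [Finset.prod_eq_multiset_prod, Multiset.map_map, Function.comp]
  have hpeel : ∏ i ∈ Finset.range n, ((X:ℂ[X]) - C (ζ ^ i))
      = (X - 1) * ∏ i ∈ Finset.Ico 1 n, ((X:ℂ[X]) - C (ζ ^ i)) := by
    rw [Finset.range_eq_Ico]
    rw [Finset.prod_eq_prod_Ico_succ_bot (by omega : (0:ℕ) < n) (fun i => (X:ℂ[X]) - C (ζ ^ i))]
    simp
  have hgeom : (X - 1) * ∏ i ∈ Finset.Ico 1 n, ((X:ℂ[X]) - C (ζ ^ i))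
      = (X - 1) * ∑ i ∈ Finset.range n, (X:ℂ[X]) ^ i := by
    rw [← hpeel, ← hX, ← geom_sum_mul, mul_comm]
  have hc : ∏ i ∈ Finset.Ico 1 n, ((X:ℂ[X]) - C (ζ ^ i)) = ∑ i ∈ Finset.range n, (X:ℂ[X]) ^ i := by
    refine mul_left_cancel₀ ?_ hgeom
    simpa using X_sub_C_ne_zero (1:ℂ)
  have := congrArg (Polynomial.eval 1) hc
  simpa [eval_prod, eval_finset_sum] using this

lemma abs_one_sub_exp (φ : ℝ) (h0 : 0 ≤ φ) (h2 : φ ≤ 2 * Real.pi) :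
    ‖1 - Complex.exp (φ * Complex.I)‖ = 2 * Real.sin (φ / 2) := by
  have hs : 0 ≤ Real.sin (φ / 2) := Real.sin_nonneg_of_nonneg_of_le_pi (by linarith) (by linarith)
  have hsq : ‖1 - Complex.exp (φ * Complex.I)‖ ^ 2 = (2 * Real.sin (φ / 2)) ^ 2 := by
    rw [Complex.sq_norm, Complex.normSq_apply]
    simp only [Complex.sub_re, Complex.sub_im, Complex.one_re, Complex.one_im,
      Complex.exp_ofReal_mul_I_re, Complex.exp_ofReal_mul_I_im]
    have h1 : Real.cos φ = 1 - 2 * Real.sin (φ / 2) ^ 2 := by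
      have hc := Real.cos_two_mul (φ/2)
      rw [show 2 * (φ/2) = φ by ring] at hc
      nlinarith [Real.sin_sq_add_cos_sq (φ/2)]
    nlinarith [Real.sin_sq_add_cos_sq φ]
  nlinarith [norm_nonneg (1 - Complex.exp (φ * Complex.I)), sq_nonneg
    (‖1 - Complex.exp (φ * Complex.I)‖ - 2 * Real.sin (φ / 2)), hs]

lemma prod_sin_eq (n : ℕ) (hn : 1 ≤ n) :
    ∏ i ∈ Finset.Ico 1 n, (2 * Real.sin (i * Real.pi / n)) = n := by
  have h := congrArg (norm : ℂ → ℝ) (prod_one_sub_zeta n hn)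
  rw [norm_prod] at h
  have habs : ∀ i ∈ Finset.Ico 1 n,
      ‖1 - Complex.exp (2 * Real.pi * Complex.I / n) ^ i‖
        = 2 * Real.sin (i * Real.pi / n) := by
    intro i hi
    simp only [Finset.mem_Ico] at hi
    have hn0 : (n:ℝ) ≠ 0 := by positivity
    have : Complex.exp (2 * Real.pi * Complex.I / n) ^ i
        = Complex.exp ((2 * Real.pi * i / n : ℝ) * Complex.I) := by
      rw [← Complex.exp_nat_mul]
      push_cast
      ring_nf
    rw [this, abs_one_sub_exp]
    · congr 1
      field_simp
    · positivity
    · rw [div_le_iff₀ (by positivity : (0:ℝ) < n)]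
      have : (i:ℝ) ≤ n := by exact_mod_cast hi.2.le
      nlinarith [Real.pi_pos]
  rw [Finset.prod_congr rfl habs] at h
  rw [h, Complex.norm_natCast]


noncomputable def gsin (m s : ℕ) : ℝ := Real.sin (s * (Real.pi / (2*m)))

lemma gsin_pos {m s : ℕ} (hm : 1 ≤ m) (h1 : 1 ≤ s) (h2 : s ≤ 2*m-1) : 0 < gsin m s := by
  apply Real.sin_pos_of_pos_of_lt_pi
  · have : (1:ℝ) ≤ s := by exact_mod_cast h1
    have : (0:ℝ) < Real.pi / (2*m) := by positivity
    nlinarith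
  · have hs : (s:ℝ) < 2*m := by
      have : s < 2*m := by omega
      exact_mod_cast this
    have hp : (0:ℝ) < Real.pi / (2*m) := by positivity
    calc (s:ℝ) * (Real.pi/(2*m)) < (2*m) * (Real.pi/(2*m)) := by
          exact mul_lt_mul_of_pos_right hs hp
      _ = Real.pi := by field_simp
lemma gsin_reflect {m s : ℕ} (hm : 1 ≤ m) (hs : s ≤ 2*m) : gsin m (2*m - s) = gsin m s := by
  unfold gsin
  have h : ((2*m - s : ℕ) : ℝ) = 2*m - s := by
    have : s ≤ 2*m := hs
    push_cast [this]; ring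
  rw [h]
  have hm' : (m:ℝ) ≠ 0 := by positivity
  rw [show (2*(m:ℝ) - s) * (Real.pi/(2*m)) = Real.pi - s * (Real.pi/(2*m)) by field_simp]
  exact Real.sin_pi_sub _

lemma gsin_m {m : ℕ} (hm : 1 ≤ m) : gsin m m = 1 := by
  unfold gsin
  have hm' : (m:ℝ) ≠ 0 := by positivity
  rw [show (m:ℝ) * (Real.pi/(2*m)) = Real.pi/2 by field_simp]
  exact Real.sin_pi_div_two

lemma icc_merge (f : ℕ → ℝ) {a b c : ℕ} (h1 : a ≤ b + 1) (h2 : b ≤ c) :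
    (∏ d ∈ Finset.Icc a b, f d) * (∏ d ∈ Finset.Icc (b+1) c, f d) = ∏ d ∈ Finset.Icc a c, f d := by
  rw [← Finset.Ico_add_one_right_eq_Icc a b, ← Finset.Ico_add_one_right_eq_Icc (b+1) c, ← Finset.Ico_add_one_right_eq_Icc a c]
  exact Finset.prod_Ico_consecutive f h1 (by omega)

lemma denom_eq (m k : ℕ) (hm : 1 ≤ m) (hk1 : 1 ≤ k) (hkm : k ≤ m) :
    ((∏ j ∈ (Finset.Icc 1 m).erase k, gsin m (j+k-1)) *
      ∏ j ∈ (Finset.Icc 1 m).erase k, |Real.sin (((j:ℝ)-(k:ℝ)) * (Real.pi/(2*m)))|) *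
      gsin m (2*k-1)
    = (∏ d ∈ Finset.Icc 1 (m-1), gsin m d)^2 := by
  have hsplit : (Finset.Icc 1 m).erase k = Finset.Icc 1 (k-1) ∪ Finset.Icc (k+1) m := by
    ext j; simp only [Finset.mem_erase, Finset.mem_Icc, Finset.mem_union]; omega
  have hdisj : Disjoint (Finset.Icc 1 (k-1)) (Finset.Icc (k+1) m) := by
    simp only [Finset.disjoint_left, Finset.mem_Icc]; omega
  -- D2
  have hD2a : ∏ j ∈ Finset.Icc 1 (k-1), |Real.sin (((j:ℝ)-(k:ℝ)) * (Real.pi/(2*m)))|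
      = ∏ d ∈ Finset.Icc 1 (k-1), gsin m d := by
    refine Finset.prod_nbij' (fun j => k - j) (fun d => k - d) ?_ ?_ ?_ ?_ ?_
    · intro a ha; simp only [Finset.mem_Icc] at *; omega
    · intro a ha; simp only [Finset.mem_Icc] at *; omega
    · intro a ha; simp only [Finset.mem_Icc] at *; omega
    · intro a ha; simp only [Finset.mem_Icc] at *; omega
    · intro j hj
      simp only [Finset.mem_Icc] at hj
      have hc : ((k - j : ℕ):ℝ) = (k:ℝ) - j := by
        have : j ≤ k := by omega
        push_cast [this]; ring
      have : ((j:ℝ)-(k:ℝ)) * (Real.pi/(2*m)) = -(((k-j:ℕ):ℝ) * (Real.pi/(2*m))) := by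
        rw [hc]; ring
      rw [this, Real.sin_neg, abs_neg]
      exact abs_of_pos (gsin_pos hm (by omega) (by omega))
  have hD2b : ∏ j ∈ Finset.Icc (k+1) m, |Real.sin (((j:ℝ)-(k:ℝ)) * (Real.pi/(2*m)))|
      = ∏ d ∈ Finset.Icc 1 (m-k), gsin m d := by
    refine Finset.prod_nbij' (fun j => j - k) (fun d => d + k) ?_ ?_ ?_ ?_ ?_
    · intro a ha; simp only [Finset.mem_Icc] at *; omega
    · intro a ha; simp only [Finset.mem_Icc] at *; omega
    · intro a ha; simp only [Finset.mem_Icc] at *; omega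
    · intro a ha; simp only [Finset.mem_Icc] at *; omega
    · intro j hj
      simp only [Finset.mem_Icc] at hj
      have hc : ((j - k : ℕ):ℝ) = (j:ℝ) - k := by
        have : k ≤ j := by omega
        push_cast [this]; ring
      rw [show ((j:ℝ)-(k:ℝ)) * (Real.pi/(2*m)) = ((j-k:ℕ):ℝ) * (Real.pi/(2*m)) by rw [hc]]
      exact abs_of_pos (gsin_pos hm (by omega) (by omega))
  -- D1
  have hD1 : (∏ j ∈ (Finset.Icc 1 m).erase k, gsin m (j+k-1)) * gsin m (2*k-1)
      = (∏ s ∈ Finset.Icc k m, gsin m s) * (∏ d ∈ Finset.Icc (m-k+1) (m-1), gsin m d) := by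
    have h1 : gsin m (2*k-1) * ∏ j ∈ (Finset.Icc 1 m).erase k, gsin m (j+k-1)
        = ∏ j ∈ Finset.Icc 1 m, gsin m (j+k-1) := by
      have hkmem : k ∈ Finset.Icc 1 m := by simp only [Finset.mem_Icc]; omega
      have := Finset.mul_prod_erase (Finset.Icc 1 m) (fun j => gsin m (j+k-1)) hkmem
      simpa [show k + k - 1 = 2*k-1 by omega] using this
    have h2 : ∏ j ∈ Finset.Icc 1 m, gsin m (j+k-1) = ∏ s ∈ Finset.Icc k (m+k-1), gsin m s := by
      refine Finset.prod_nbij' (fun j => j + k - 1) (fun s => s - k + 1) ?_ ?_ ?_ ?_ ?_ <;>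
        intro a ha <;> simp only [Finset.mem_Icc] at * <;> omega
    have h3 : ∏ s ∈ Finset.Icc k (m+k-1), gsin m s
        = (∏ s ∈ Finset.Icc k m, gsin m s) * (∏ s ∈ Finset.Icc (m+1) (m+k-1), gsin m s) := by
      rw [icc_merge (gsin m) (by omega) (by omega)]
    have h4 : ∏ s ∈ Finset.Icc (m+1) (m+k-1), gsin m s
        = ∏ d ∈ Finset.Icc (m-k+1) (m-1), gsin m d := by
      refine Finset.prod_nbij' (fun s => 2*m - s) (fun d => 2*m - d) ?_ ?_ ?_ ?_ ?_
      · intro a ha; simp only [Finset.mem_Icc] at *; omega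
      · intro a ha; simp only [Finset.mem_Icc] at *; omega
      · intro a ha; simp only [Finset.mem_Icc] at *; omega
      · intro a ha; simp only [Finset.mem_Icc] at *; omega
      · intro s hs
        simp only [Finset.mem_Icc] at hs
        exact (gsin_reflect hm (by omega)).symm
    rw [mul_comm] at h1
    rw [h1, h2, h3, h4]
  -- combine
  have habs : ∏ j ∈ (Finset.Icc 1 m).erase k, |Real.sin (((j:ℝ)-(k:ℝ)) * (Real.pi/(2*m)))|
      = (∏ d ∈ Finset.Icc 1 (k-1), gsin m d) * ∏ d ∈ Finset.Icc 1 (m-k), gsin m d := by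
    rw [hsplit, Finset.prod_union hdisj, hD2a, hD2b]
  rw [habs]
  rw [show ((∏ j ∈ (Finset.Icc 1 m).erase k, gsin m (j+k-1)) *
      ((∏ d ∈ Finset.Icc 1 (k-1), gsin m d) * ∏ d ∈ Finset.Icc 1 (m-k), gsin m d)) * gsin m (2*k-1)
      = ((∏ j ∈ (Finset.Icc 1 m).erase k, gsin m (j+k-1)) * gsin m (2*k-1)) *
        ((∏ d ∈ Finset.Icc 1 (k-1), gsin m d) * ∏ d ∈ Finset.Icc 1 (m-k), gsin m d) by ring]
  rw [hD1]
  have merge1 : (∏ d ∈ Finset.Icc 1 (k-1), gsin m d) * (∏ s ∈ Finset.Icc k m, gsin m s)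
      = ∏ d ∈ Finset.Icc 1 m, gsin m d := by
    have := icc_merge (gsin m) (a := 1) (b := k-1) (c := m) (by omega) (by omega)
    rwa [show k - 1 + 1 = k by omega] at this
  have merge2 : (∏ d ∈ Finset.Icc 1 (m-k), gsin m d) * (∏ d ∈ Finset.Icc (m-k+1) (m-1), gsin m d)
      = ∏ d ∈ Finset.Icc 1 (m-1), gsin m d := by
    exact icc_merge (gsin m) (by omega) (by omega)
  have hlast : ∏ d ∈ Finset.Icc 1 m, gsin m d
      = ∏ d ∈ Finset.Icc 1 (m-1), gsin m d := by
    have : (∏ d ∈ Finset.Icc 1 (m-1), gsin m d) * (∏ d ∈ Finset.Icc m m, gsin m d)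
        = ∏ d ∈ Finset.Icc 1 m, gsin m d := by
      have := icc_merge (gsin m) (a := 1) (b := m-1) (c := m) (by omega) (by omega)
      rwa [show m - 1 + 1 = m by omega] at this
    rw [← this, Finset.Icc_self, Finset.prod_singleton, gsin_m hm, mul_one]
  calc ((∏ s ∈ Finset.Icc k m, gsin m s) * ∏ d ∈ Finset.Icc (m-k+1) (m-1), gsin m d) *
        ((∏ d ∈ Finset.Icc 1 (k-1), gsin m d) * ∏ d ∈ Finset.Icc 1 (m-k), gsin m d)
      = ((∏ d ∈ Finset.Icc 1 (k-1), gsin m d) * (∏ s ∈ Finset.Icc k m, gsin m s)) *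
        ((∏ d ∈ Finset.Icc 1 (m-k), gsin m d) * ∏ d ∈ Finset.Icc (m-k+1) (m-1), gsin m d) := by ring
    _ = (∏ d ∈ Finset.Icc 1 (m-1), gsin m d)^2 := by
        rw [merge1, merge2, hlast]; ring

noncomputable def psin (m j : ℕ) : ℝ := Real.sin ((2*(j:ℝ)-1) * Real.pi / (4*m))
noncomputable def pcos (m j : ℕ) : ℝ := Real.cos ((2*(j:ℝ)-1) * Real.pi / (4*m))

lemma angle_mem {m j : ℕ} (hm : 1 ≤ m) (h1 : 1 ≤ j) (h2 : j ≤ m) :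
    0 < (2*(j:ℝ)-1) * Real.pi / (4*m) ∧ (2*(j:ℝ)-1) * Real.pi / (4*m) < Real.pi/2 := by
  have hj1 : (1:ℝ) ≤ j := by exact_mod_cast h1
  have hjm : (j:ℝ) ≤ m := by exact_mod_cast h2
  have hm1 : (1:ℝ) ≤ m := by exact_mod_cast hm
  constructor
  · apply div_pos (by nlinarith [Real.pi_pos]) (by positivity)
  · rw [div_lt_iff₀ (by positivity)]
    nlinarith [Real.pi_pos]

lemma psin_pos {m j : ℕ} (hm : 1 ≤ m) (h1 : 1 ≤ j) (h2 : j ≤ m) : 0 < psin m j := by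
  obtain ⟨ha, hb⟩ := angle_mem hm h1 h2
  exact Real.sin_pos_of_pos_of_lt_pi ha (by linarith [Real.pi_pos])

lemma pcos_pos {m j : ℕ} (hm : 1 ≤ m) (h1 : 1 ≤ j) (h2 : j ≤ m) : 0 < pcos m j := by
  obtain ⟨ha, hb⟩ := angle_mem hm h1 h2
  exact Real.cos_pos_of_mem_Ioo ⟨by linarith [Real.pi_pos], hb⟩

lemma double_angle {m j : ℕ} (hm : 1 ≤ m) (h1 : 1 ≤ j) :
    2 * psin m j * pcos m j = gsin m (2*j-1) := by
  unfold psin pcos gsin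
  rw [← Real.sin_two_mul]
  congr 1
  have hc : ((2*j-1 : ℕ):ℝ) = 2*(j:ℝ)-1 := by
    have h : 1 ≤ 2*j := by omega
    push_cast [h]
    ring
  rw [hc]
  have hm' : (m:ℝ) ≠ 0 := by positivity
  field_simp
  ring

lemma reflect_cos {m j : ℕ} (hm : 1 ≤ m) (h1 : 1 ≤ j) (h2 : j ≤ m) :
    pcos m j = psin m (m+1-j) := by
  unfold pcos psin
  have hc : ((m+1-j : ℕ):ℝ) = (m:ℝ)+1-j := by
    have : j ≤ m+1 := by omega
    push_cast [this]; ring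
  rw [hc, ← Real.cos_pi_div_two_sub]
  congr 1
  have hm' : (m:ℝ) ≠ 0 := by positivity
  field_simp
  ring

lemma odd_even_split (f : ℕ → ℝ) (a : ℕ) :
    (∏ j ∈ Finset.Icc 1 a, f (2*j-1)) * (∏ d ∈ Finset.Icc 1 (a-1), f (2*d))
      = ∏ r ∈ Finset.Icc 1 (2*a-1), f r := by
  induction a with
  | zero => simp
  | succ n ih =>
    rcases Nat.eq_zero_or_pos n with rfl | hn
    · simp
    · rw [Finset.prod_Icc_succ_top (by omega) (fun j => f (2*j-1))]
      rw [show n+1-1 = (n-1)+1 by omega, Finset.prod_Icc_succ_top (by omega) (fun d => f (2*d))]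
      rw [show 2*(n+1)-1 = (2*n-1)+1+1 by omega, Finset.prod_Icc_succ_top (by omega) f,
        Finset.prod_Icc_succ_top (by omega) f]
      rw [show n-1+1 = n by omega, show 2*n-1+1 = 2*n by omega, ← ih]
      ring

lemma fold_eq (m : ℕ) (hm : 1 ≤ m) :
    ∏ r ∈ Finset.Icc 1 (2*m-1), gsin m r = (∏ d ∈ Finset.Icc 1 (m-1), gsin m d)^2 := by
  have h1 : (∏ r ∈ Finset.Icc 1 m, gsin m r) * (∏ r ∈ Finset.Icc (m+1) (2*m-1), gsin m r)
      = ∏ r ∈ Finset.Icc 1 (2*m-1), gsin m r := icc_merge (gsin m) (by omega) (by omega)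
  have h2 : ∏ r ∈ Finset.Icc (m+1) (2*m-1), gsin m r = ∏ d ∈ Finset.Icc 1 (m-1), gsin m d := by
    refine Finset.prod_nbij' (fun s => 2*m - s) (fun d => 2*m - d) ?_ ?_ ?_ ?_ ?_
    · intro a ha; simp only [Finset.mem_Icc] at *; omega
    · intro a ha; simp only [Finset.mem_Icc] at *; omega
    · intro a ha; simp only [Finset.mem_Icc] at *; omega
    · intro a ha; simp only [Finset.mem_Icc] at *; omega
    · intro s hs; simp only [Finset.mem_Icc] at hs
      exact (gsin_reflect hm (by omega)).symm
  have h3 : ∏ r ∈ Finset.Icc 1 m, gsin m r = ∏ d ∈ Finset.Icc 1 (m-1), gsin m d := by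
    have h := icc_merge (gsin m) (a := 1) (b := m-1) (c := m) (by omega) (by omega)
    rw [show m - 1 + 1 = m by omega] at h
    rw [← h, Finset.Icc_self, Finset.prod_singleton, gsin_m hm, mul_one]
  rw [← h1, h2, h3]; ring

lemma key_PQ (m : ℕ) (hm : 1 ≤ m) :
    2 * m * (∏ j ∈ Finset.Icc 1 m, psin m j)^2 = (∏ d ∈ Finset.Icc 1 (m-1), gsin m d)^2 := by
  have hPC : ∏ j ∈ Finset.Icc 1 m, pcos m j = ∏ j ∈ Finset.Icc 1 m, psin m j := by
    refine Finset.prod_nbij' (fun j => m + 1 - j) (fun j => m + 1 - j) ?_ ?_ ?_ ?_ ?_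
    · intro a ha; simp only [Finset.mem_Icc] at *; omega
    · intro a ha; simp only [Finset.mem_Icc] at *; omega
    · intro a ha; simp only [Finset.mem_Icc] at *; omega
    · intro a ha; simp only [Finset.mem_Icc] at *; omega
    · intro j hj; simp only [Finset.mem_Icc] at hj
      exact reflect_cos hm hj.1 hj.2
  have hP2 : 2^m * (∏ j ∈ Finset.Icc 1 m, psin m j)^2
      = ∏ j ∈ Finset.Icc 1 m, gsin m (2*j-1) := by
    calc 2^m * (∏ j ∈ Finset.Icc 1 m, psin m j)^2
        = 2^m * ((∏ j ∈ Finset.Icc 1 m, psin m j) * ∏ j ∈ Finset.Icc 1 m, pcos m j) := by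
          rw [hPC]; ring
      _ = ∏ j ∈ Finset.Icc 1 m, (2 * psin m j * pcos m j) := by
          rw [Finset.prod_mul_distrib, Finset.prod_mul_distrib, Finset.prod_const,
            Nat.card_Icc]
          simp only [Nat.add_sub_cancel]
          ring
      _ = ∏ j ∈ Finset.Icc 1 m, gsin m (2*j-1) := by
          refine Finset.prod_congr rfl fun j hj => ?_
          simp only [Finset.mem_Icc] at hj
          exact double_angle hm hj.1
  have hQ'' : 2^(m-1) * ∏ d ∈ Finset.Icc 1 (m-1), gsin m (2*d) = m := by
    have h := prod_sin_eq m hm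
    have he : ∀ d ∈ Finset.Ico 1 m, 2 * Real.sin (d * Real.pi / m) = 2 * gsin m (2*d) := by
      intro d hd
      unfold gsin
      congr 2
      push_cast
      have hm' : (m:ℝ) ≠ 0 := by positivity
      field_simp
    rw [Finset.prod_congr rfl he, Finset.prod_mul_distrib, Finset.prod_const, Nat.card_Ico] at h
    rw [← Finset.Ico_add_one_right_eq_Icc, show m-1+1 = m by omega]
    exact h
  have hsplit := odd_even_split (gsin m) m
  have hfold := fold_eq m hm
  have h2pos : (0:ℝ) < 2^(m-1) := by positivity
  have : 2^(m-1) * ((2^m * (∏ j ∈ Finset.Icc 1 m, psin m j)^2) *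
      ∏ d ∈ Finset.Icc 1 (m-1), gsin m (2*d)) = 2^(m-1) *
      ((∏ d ∈ Finset.Icc 1 (m-1), gsin m d)^2) := by
    rw [hP2, hsplit, hfold]
  have hgoal : (2:ℝ)^(m-1) * (2 * m * (∏ j ∈ Finset.Icc 1 m, psin m j)^2)
      = 2^(m-1) * ((∏ d ∈ Finset.Icc 1 (m-1), gsin m d)^2) := by
    rw [← this]
    have hpow : (2:ℝ)^m = 2 * 2^(m-1) := by
      rw [← pow_succ']
      congr 1
      omega
    calc (2:ℝ)^(m-1) * (2 * m * (∏ j ∈ Finset.Icc 1 m, psin m j)^2)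
        = (2^(m-1) * m) * (2 * (∏ j ∈ Finset.Icc 1 m, psin m j)^2) := by ring
      _ = _ := by rw [← hQ'']; rw [hpow]; ring
  exact mul_left_cancel₀ (ne_of_gt h2pos) hgoal

lemma sin_sq_sub' (a b : ℝ) :
    Real.sin a^2 - Real.sin b^2 = Real.sin (a+b) * Real.sin (a-b) := by
  rw [Real.sin_add, Real.sin_sub]
  nlinarith [Real.sin_sq_add_cos_sq a, Real.sin_sq_add_cos_sq b]

lemma term_eq (m k : ℕ) (hm : 1 ≤ m) (hk1 : 1 ≤ k) (hkm : k ≤ m) :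
    ∏ j ∈ (Finset.Icc 1 m).erase k, |chebNode m j / (chebNode m j - chebNode m k)|
      = pcos m k / (m * psin m k) := by
  have hcheb : ∀ j, chebNode m j = psin m j ^ 2 := fun j => rfl
  have hfac : ∀ j ∈ (Finset.Icc 1 m).erase k,
      |chebNode m j / (chebNode m j - chebNode m k)|
        = psin m j^2 / (gsin m (j+k-1) * |Real.sin (((j:ℝ)-(k:ℝ)) * (Real.pi/(2*m)))|) := by
    intro j hj
    simp only [Finset.mem_erase, Finset.mem_Icc] at hj
    obtain ⟨hjk, hj1, hjm⟩ := hj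
    have hm' : (m:ℝ) ≠ 0 := by positivity
    have ha : (2*(j:ℝ)-1) * Real.pi / (4*m) + (2*(k:ℝ)-1) * Real.pi / (4*m)
        = ((j+k-1 : ℕ):ℝ) * (Real.pi/(2*m)) := by
      have hcast : ((j+k-1 : ℕ):ℝ) = (j:ℝ) + k - 1 := by
        have h : 1 ≤ j + k := by omega
        push_cast [h]; ring
      rw [hcast]; field_simp; ring
    have hb : (2*(j:ℝ)-1) * Real.pi / (4*m) - (2*(k:ℝ)-1) * Real.pi / (4*m)
        = ((j:ℝ)-(k:ℝ)) * (Real.pi/(2*m)) := by field_simp; ring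
    have hdiff : chebNode m j - chebNode m k
        = gsin m (j+k-1) * Real.sin (((j:ℝ)-(k:ℝ)) * (Real.pi/(2*m))) := by
      rw [hcheb j, hcheb k]
      unfold psin gsin
      rw [sin_sq_sub', ha, hb]
    rw [abs_div, hdiff, abs_mul, abs_of_pos (gsin_pos hm (by omega) (by omega)),
      hcheb j, abs_of_nonneg (sq_nonneg _)]
  rw [Finset.prod_congr rfl hfac, Finset.prod_div_distrib, Finset.prod_mul_distrib]
  set P := ∏ j ∈ Finset.Icc 1 m, psin m j with hP
  set Q := ∏ d ∈ Finset.Icc 1 (m-1), gsin m d with hQ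
  set N := ∏ j ∈ (Finset.Icc 1 m).erase k, psin m j ^ 2 with hN
  set D1 := ∏ j ∈ (Finset.Icc 1 m).erase k, gsin m (j+k-1) with hD1
  set D2 := ∏ j ∈ (Finset.Icc 1 m).erase k, |Real.sin (((j:ℝ)-(k:ℝ)) * (Real.pi/(2*m)))| with hD2
  have hkmem : k ∈ Finset.Icc 1 m := by simp only [Finset.mem_Icc]; omega
  have hNkey : psin m k ^ 2 * N = P ^ 2 := by
    rw [hN, hP, Finset.mul_prod_erase (Finset.Icc 1 m) (fun j => psin m j ^ 2) hkmem, Finset.prod_pow]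
  have hDkey : (D1 * D2) * gsin m (2*k-1) = Q ^ 2 := denom_eq m k hm hk1 hkm
  have hQP : 2 * (m:ℝ) * P ^ 2 = Q ^ 2 := key_PQ m hm
  have hg : 2 * psin m k * pcos m k = gsin m (2*k-1) := double_angle hm hk1
  have hPpos : 0 < P := Finset.prod_pos fun j hj => by
    simp only [Finset.mem_Icc] at hj; exact psin_pos hm hj.1 hj.2
  have hQpos : 0 < Q := Finset.prod_pos fun d hd => by
    simp only [Finset.mem_Icc] at hd; exact gsin_pos hm hd.1 (by omega)
  have hgpos : 0 < gsin m (2*k-1) := gsin_pos hm (by omega) (by omega)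
  have hspos : 0 < psin m k := psin_pos hm hk1 hkm
  have hcpos : 0 < pcos m k := pcos_pos hm hk1 hkm
  have hmpos : (0:ℝ) < m := by positivity
  have hDpos : 0 < D1 * D2 := by
    have h := hDkey
    nlinarith [sq_nonneg Q]
  have hmain : (N * ((m:ℝ) * psin m k) - pcos m k * (D1 * D2)) * gsin m (2*k-1) = 0 := by
    linear_combination (N * (m:ℝ) * psin m k) * hg.symm + pcos m k * hQP
      - pcos m k * hDkey + (2 * (m:ℝ) * pcos m k) * hNkey
  have heq : N * ((m:ℝ) * psin m k) = pcos m k * (D1 * D2) := by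
    have := mul_eq_zero.mp hmain
    rcases this with h | h
    · linarith [sub_eq_zero.mp h]
    · exact absurd h (ne_of_gt hgpos)
  rw [div_eq_div_iff (ne_of_gt hDpos) (by positivity)]
  linarith

lemma term_bound (m k : ℕ) (hm : 1 ≤ m) (hk1 : 1 ≤ k) (hkm : k ≤ m) :
    pcos m k / (m * psin m k) ≤ 4 / Real.pi * (1 / (2*(k:ℝ)-1)) := by
  set θ := (2*(k:ℝ)-1) * Real.pi / (4*m) with hθ
  obtain ⟨hθpos, hθlt⟩ := angle_mem hm hk1 hkm
  have htan := Real.lt_tan hθpos hθlt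
  rw [Real.tan_eq_sin_div_cos] at htan
  have hspos : 0 < psin m k := psin_pos hm hk1 hkm
  have hcpos : 0 < pcos m k := pcos_pos hm hk1 hkm
  have hkey : θ * pcos m k < psin m k := (lt_div_iff₀ hcpos).mp htan
  have hk1' : (1:ℝ) ≤ k := by exact_mod_cast hk1
  have hmpos : (0:ℝ) < m := by positivity
  have h2k : (0:ℝ) < 2*(k:ℝ)-1 := by linarith
  have hRHS : 4/Real.pi * (1/(2*(k:ℝ)-1)) = 4/(Real.pi*(2*(k:ℝ)-1)) := by
    rw [div_mul_div_comm, mul_one]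
  rw [hRHS, div_le_div_iff₀ (by positivity) (by positivity)]
  have hθeq : Real.pi*(2*(k:ℝ)-1) = 4*m*θ := by
    rw [hθ]; field_simp
  rw [hθeq]
  nlinarith [hkey, hmpos]

lemma harmonic_odd (m : ℕ) (hm : 1 ≤ m) :
    ∑ k ∈ Finset.Icc 1 m, (1:ℝ)/(2*(k:ℝ)-1) ≤ 1 + Real.log (2*(m:ℝ)-1)/2 := by
  induction m with
  | zero => omega
  | succ n ih =>
    rcases Nat.eq_zero_or_pos n with rfl | hn
    · norm_num
    · rw [Finset.sum_Icc_succ_top (by omega)]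
      have hn1 : (1:ℝ) ≤ n := by exact_mod_cast hn
      have ha : (0:ℝ) < 2*(n:ℝ)-1 := by linarith
      have hb : (0:ℝ) < 2*(n:ℝ)+1 := by linarith
      have h1 : Real.log ((2*(n:ℝ)-1)/(2*(n:ℝ)+1)) ≤ (2*(n:ℝ)-1)/(2*(n:ℝ)+1) - 1 :=
        Real.log_le_sub_one_of_pos (by positivity)
      have h2 : Real.log ((2*(n:ℝ)-1)/(2*(n:ℝ)+1))
          = Real.log (2*(n:ℝ)-1) - Real.log (2*(n:ℝ)+1) :=
        Real.log_div (ne_of_gt ha) (ne_of_gt hb)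
      have h3 : (2*(n:ℝ)-1)/(2*(n:ℝ)+1) - 1 = -(2/(2*(n:ℝ)+1)) := by
        field_simp
        ring
      have ihh := ih hn
      push_cast
      rw [h2, h3] at h1
      have hfrac : (1:ℝ)/(2*((n:ℝ)+1)-1) = 1/(2*(n:ℝ)+1) := by ring_nf
      have : Real.log (2*((n:ℝ)+1)-1) = Real.log (2*(n:ℝ)+1) := by ring_nf
      rw [hfrac, this]
      have h4 : 2/(2*(n:ℝ)+1) = 2*(1/(2*(n:ℝ)+1)) := by ring
      linarith

/-- The condition number `α(x) = ∑_{k=1}^m ∏_{j≠k} |x_j/(x_j - x_k)|` of Richardson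
extrapolation with Chebyshev nodes satisfies `α(x) ≤ 3 log m` for `m ≥ 2`. -/
theorem chebNode_condition_number_le (m : ℕ) (hm : 2 ≤ m) :
    ∑ k ∈ Finset.Icc 1 m,
        ∏ j ∈ (Finset.Icc 1 m).erase k, |chebNode m j / (chebNode m j - chebNode m k)| ≤
      3 * Real.log m := by
  have hm1 : 1 ≤ m := by omega
  have step1 : ∑ k ∈ Finset.Icc 1 m,
      ∏ j ∈ (Finset.Icc 1 m).erase k, |chebNode m j / (chebNode m j - chebNode m k)|
      = ∑ k ∈ Finset.Icc 1 m, pcos m k / (m * psin m k) := by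
    refine Finset.sum_congr rfl fun k hk => ?_
    simp only [Finset.mem_Icc] at hk
    exact term_eq m k hm1 hk.1 hk.2
  have step2 : ∑ k ∈ Finset.Icc 1 m, pcos m k / (m * psin m k)
      ≤ ∑ k ∈ Finset.Icc 1 m, 4 / Real.pi * (1 / (2*(k:ℝ)-1)) := by
    refine Finset.sum_le_sum fun k hk => ?_
    simp only [Finset.mem_Icc] at hk
    exact term_bound m k hm1 hk.1 hk.2
  have step3 : ∑ k ∈ Finset.Icc 1 m, 4 / Real.pi * (1 / (2*(k:ℝ)-1))
      = 4 / Real.pi * ∑ k ∈ Finset.Icc 1 m, (1:ℝ) / (2*(k:ℝ)-1) := by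
    rw [Finset.mul_sum]
  have hπpos := Real.pi_pos
  have step4 : 4 / Real.pi * ∑ k ∈ Finset.Icc 1 m, (1:ℝ) / (2*(k:ℝ)-1)
      ≤ 4 / Real.pi * (1 + Real.log (2*(m:ℝ)-1)/2) := by
    apply mul_le_mul_of_nonneg_left (harmonic_odd m hm1) (by positivity)
  have hπ : 3.141592 < Real.pi := Real.pi_gt_d6
  have hlog2u : Real.log 2 < 0.6931471808 := Real.log_two_lt_d9
  have hlog2l : 0.6931471803 < Real.log 2 := Real.log_two_gt_d9
  have step5 : 4 / Real.pi * (1 + Real.log (2*(m:ℝ)-1)/2) ≤ 3 * Real.log m := by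
    rw [div_mul_eq_mul_div, div_le_iff₀ hπpos]
    rcases eq_or_lt_of_le hm with rfl | hm3
    · norm_num
      have h32 : Real.log 3 ≤ Real.log 2 + 1/2 := by
        have h1 : Real.log (3/2) ≤ 3/2 - 1 := Real.log_le_sub_one_of_pos (by norm_num)
        have h2 : Real.log ((3:ℝ)/2) = Real.log 3 - Real.log 2 :=
          Real.log_div (by norm_num) (by norm_num)
        linarith
      nlinarith [Real.log_nonneg (by norm_num : (1:ℝ) ≤ 2)]
    · have hm3' : (3:ℕ) ≤ m := hm3
      have hm3r : (3:ℝ) ≤ m := by exact_mod_cast hm3'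
      have hL : 1 ≤ Real.log m := by
        rw [Real.le_log_iff_exp_le (by positivity)]
        have := Real.exp_one_lt_d9
        linarith
      have h2m : Real.log (2*(m:ℝ)-1) ≤ Real.log 2 + Real.log m := by
        rw [← Real.log_mul (by norm_num) (by positivity)]
        apply Real.log_le_log (by linarith)
        linarith
      nlinarith [mul_lt_mul_of_pos_right hπ (show (0:ℝ) < Real.log m by linarith),
        mul_le_mul_of_nonneg_left hL (show (0:ℝ) ≤ 3*3.141592 - 2 by norm_num)]
  linarith [step2, step4, step5, le_of_eq step1, le_of_eq step3]
end
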